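/- Among all k-element sub-multisets of a sorted list x_1 ≤ ... ≤ x_n, a subset maximizing the variance can be obtained by removing n−k consecutive elements of the sorted list: there exists an index i such that removing x_{i+1},...,x_{i+n-k} yields a k-maximal variance subset. -/

import Mathlib

open Finset

/-- Population variance of the sub-multiset of `x` indexed by a finite index set `s`. -/
noncomputable def svar {n : ℕ} (x : Fin n → ℝ) (s : Finset (Fin n)) : ℝ :=
  (∑ i ∈ s, x i ^ 2) / s.card - ((∑ i ∈ s, x i) / s.card) ^ 2

/-- A quadratic with nonnegative leading coefficient attains its max on an
interval at an endpoint. -/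
lemma quad_max (A B C α β t : ℝ) (hA : 0 ≤ A) (h1 : α ≤ t) (h2 : t ≤ β) :
    A*t^2 + B*t + C ≤ max (A*α^2 + B*α + C) (A*β^2 + B*β + C) := by
  rcases eq_or_lt_of_le (h1.trans h2) with heq | hlt
  · have ht : t = β := le_antisymm h2 (heq ▸ h1)
    subst ht
    rw [← heq]
    exact le_max_left _ _
  · set M := max (A*α^2 + B*α + C) (A*β^2 + B*β + C) with hM
    have hm1 : A*α^2 + B*α + C ≤ M := le_max_left _ _
    have hm2 : A*β^2 + B*β + C ≤ M := le_max_right _ _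
    have key : (β-α)*(A*t^2+B*t+C) ≤ (β-t)*(A*α^2+B*α+C) + (t-α)*(A*β^2+B*β+C) := by
      nlinarith [mul_nonneg hA (mul_nonneg (mul_nonneg (sub_nonneg.2 hlt.le)
        (sub_nonneg.2 h2)) (sub_nonneg.2 h1))]
    have h3 : (β-α)*(A*t^2+B*t+C) ≤ (β-α)*M := by
      have e1 := mul_le_mul_of_nonneg_left hm1 (sub_nonneg.2 h2)
      have e2 := mul_le_mul_of_nonneg_left hm2 (sub_nonneg.2 h1)
      nlinarith [key, e1, e2]
    exact le_of_mul_le_mul_left h3 (by linarith)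

lemma svar_insert {n : ℕ} (x : Fin n → ℝ) (S : Finset (Fin n)) (u : Fin n) (hu : u ∉ S) :
    svar x (insert u S) =
      ((∑ i ∈ S, x i ^ 2) + x u ^ 2) / ((S.card : ℝ) + 1)
        - (((∑ i ∈ S, x i) + x u) / ((S.card : ℝ) + 1)) ^ 2 := by
  rw [svar, Finset.sum_insert hu, Finset.sum_insert hu, Finset.card_insert_of_notMem hu]
  push_cast
  ring_nf

/-- Swapping an interior element for one of two extreme ones (in value) cannot
decrease the variance for at least one of the two choices. -/
lemma swap_le {n : ℕ} (x : Fin n → ℝ) (s : Finset (Fin n))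
    (q a b : Fin n) (hq : q ∈ s) (ha : a ∉ s) (hb : b ∉ s)
    (h1 : x a ≤ x q) (h2 : x q ≤ x b) :
    svar x s ≤ max (svar x (insert a (s.erase q))) (svar x (insert b (s.erase q))) := by
  set S := s.erase q with hS
  have hqS : q ∉ S := Finset.notMem_erase _ _
  have haS : a ∉ S := fun h => ha (Finset.mem_of_mem_erase h)
  have hbS : b ∉ S := fun h => hb (Finset.mem_of_mem_erase h)
  have hsq : s = insert q S := (Finset.insert_erase hq).symm
  set K : ℝ := (S.card : ℝ) + 1 with hK
  have hKpos : (0:ℝ) < K := by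
    have : (0:ℝ) ≤ (S.card : ℝ) := Nat.cast_nonneg _
    linarith
  have hK1 : (1:ℝ) ≤ K := by
    have : (0:ℝ) ≤ (S.card : ℝ) := Nat.cast_nonneg _
    linarith
  set P : ℝ := ∑ i ∈ S, x i with hP
  set Q : ℝ := ∑ i ∈ S, x i ^ 2 with hQ
  have hrw : ∀ t : ℝ, (Q + t^2)/K - ((P+t)/K)^2
      = (1/K - 1/K^2)*t^2 + (-2*P/K^2)*t + (Q/K - P^2/K^2) := by
    intro t
    field_simp
    ring
  have hA : (0:ℝ) ≤ 1/K - 1/K^2 := by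
    have : 1/K - 1/K^2 = (K-1)/K^2 := by field_simp
    rw [this]
    apply div_nonneg (by linarith) (sq_nonneg K)
  rw [hsq, svar_insert x S q hqS, svar_insert x S a haS, svar_insert x S b hbS,
    ← hP, ← hQ, ← hK, hrw, hrw, hrw]
  exact quad_max _ _ _ _ _ _ hA (by nlinarith [hKpos, h1, sq_nonneg K]) (by nlinarith [hKpos, h2])

lemma case1 {n k : ℕ} (hk : 0 < k) (hkn : k < n) (s : Finset (Fin n))
    (hs : s.card = k) (hC : sᶜ.Nonempty)
    (hint : ∀ j : Fin n, sᶜ.min' hC ≤ j → j ≤ sᶜ.max' hC → j ∈ sᶜ) :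
    ∃ i, i + (n - k) ≤ n ∧
      s = univ.filter (fun j : Fin n => (j : ℕ) < i ∨ i + (n - k) ≤ (j : ℕ)) := by
  set a := sᶜ.min' hC with haa
  set b := sᶜ.max' hC with hbb
  have hab : a ≤ b := Finset.min'_le _ _ (Finset.max'_mem _ hC)
  have hCeq : sᶜ = Finset.Icc a b := by
    ext j
    simp only [Finset.mem_Icc]
    exact ⟨fun hj => ⟨Finset.min'_le _ _ hj, Finset.le_max' _ _ hj⟩,
      fun h => hint j h.1 h.2⟩
  have hcard : n - k = (b : ℕ) + 1 - (a : ℕ) := by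
    have h1 : sᶜ.card = n - k := by
      rw [Finset.card_compl, hs, Fintype.card_fin]
    rw [hCeq, Fin.card_Icc] at h1
    omega
  have hab' : (a : ℕ) ≤ (b : ℕ) := hab
  have hbn : (b : ℕ) < n := b.isLt
  refine ⟨(a : ℕ), by omega, ?_⟩
  ext j
  simp only [Finset.mem_filter, Finset.mem_univ, true_and]
  have hj : j ∈ s ↔ j ∉ sᶜ := by simp
  rw [hj, hCeq, Finset.mem_Icc, Fin.le_def, Fin.le_def]
  omega

lemma lemA {n k : ℕ} (hk : 0 < k) (hkn : k < n) (x : Fin n → ℝ) (hmono : Monotone x) (m : ℕ) :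
    ∀ s : Finset (Fin n), s.card = k → ∀ hC : sᶜ.Nonempty,
      ((sᶜ.max' hC : Fin n) : ℕ) ≤ m + ((sᶜ.min' hC : Fin n) : ℕ) →
      ∃ i, i + (n - k) ≤ n ∧ svar x s ≤
        svar x (univ.filter (fun j : Fin n => (j : ℕ) < i ∨ i + (n - k) ≤ (j : ℕ))) := by
  induction m with
  | zero =>
    intro s hs hC hm
    have hint : ∀ j : Fin n, sᶜ.min' hC ≤ j → j ≤ sᶜ.max' hC → j ∈ sᶜ := by
      intro j h1 h2
      have : j = sᶜ.min' hC := by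
        apply Fin.ext
        have h1' : ((sᶜ.min' hC : Fin n) : ℕ) ≤ (j : ℕ) := h1
        have h2' : (j : ℕ) ≤ ((sᶜ.max' hC : Fin n) : ℕ) := h2
        omega
      rw [this]
      exact Finset.min'_mem _ _
    obtain ⟨i, hi, heq⟩ := case1 hk hkn s hs hC hint
    exact ⟨i, hi, le_of_eq (by rw [← heq])⟩
  | succ m ih =>
    intro s hs hC hm
    by_cases hint : ∀ j : Fin n, sᶜ.min' hC ≤ j → j ≤ sᶜ.max' hC → j ∈ sᶜ
    · obtain ⟨i, hi, heq⟩ := case1 hk hkn s hs hC hint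
      exact ⟨i, hi, le_of_eq (by rw [← heq])⟩
    · push_neg at hint
      obtain ⟨q, hq1, hq2, hq3⟩ := hint
      set a := sᶜ.min' hC with haa
      set b := sᶜ.max' hC with hbb
      have ha : a ∈ sᶜ := Finset.min'_mem _ _
      have hb : b ∈ sᶜ := Finset.max'_mem _ _
      have has : a ∉ s := Finset.mem_compl.mp ha
      have hbs : b ∉ s := Finset.mem_compl.mp hb
      have hqs : q ∈ s := by
        by_contra h
        exact hq3 (Finset.mem_compl.mpr h)
      have haq : a < q := lt_of_le_of_ne hq1 (by rintro rfl; exact hq3 ha)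
      have hqb : q < b := lt_of_le_of_ne hq2 (by rintro rfl; exact hq3 hb)
      have hmem : ∀ c : Fin n, c ∉ s →
          ∀ j : Fin n, j ∈ (insert c (s.erase q))ᶜ ↔ j ≠ c ∧ (j ∉ s ∨ j = q) := by
        intro c hcs j
        simp only [Finset.mem_compl, Finset.mem_insert, Finset.mem_erase, not_or, not_and]
        constructor
        · rintro ⟨h1, h2⟩
          refine ⟨h1, ?_⟩
          by_cases hjs : j ∈ s
          · right
            by_contra hne
            exact (h2 hne) hjs
          · exact Or.inl hjs
        · rintro ⟨h1, h2⟩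
          refine ⟨h1, fun hne hjs => ?_⟩
          rcases h2 with h2 | h2
          · exact h2 hjs
          · exact hne h2
      have hcard : ∀ c : Fin n, c ∉ s → (insert c (s.erase q)).card = k := by
        intro c hcs
        rw [Finset.card_insert_of_notMem (fun h => hcs (Finset.mem_of_mem_erase h)),
          Finset.card_erase_of_mem hqs, hs]
        omega
      -- set with a swapped in
      have hC1 : (insert a (s.erase q))ᶜ.Nonempty := by
        refine ⟨b, (hmem a has b).mpr ⟨(haq.trans hqb).ne', Or.inl hbs⟩⟩
      have hbd1 : ∀ j ∈ (insert a (s.erase q))ᶜ, a < j ∧ j ≤ b := by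
        intro j hj
        rw [hmem a has j] at hj
        obtain ⟨hja, hj2⟩ := hj
        rcases hj2 with hj2 | hj2
        · have : j ∈ sᶜ := Finset.mem_compl.mpr hj2
          exact ⟨lt_of_le_of_ne (Finset.min'_le _ _ this) (Ne.symm hja),
            Finset.le_max' _ _ this⟩
        · subst hj2; exact ⟨haq, hqb.le⟩
      have hm1 : (((insert a (s.erase q))ᶜ.max' hC1 : Fin n) : ℕ) ≤
          m + (((insert a (s.erase q))ᶜ.min' hC1 : Fin n) : ℕ) := by
        have e1 := hbd1 _ (Finset.max'_mem _ hC1)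
        have e2 := hbd1 _ (Finset.min'_mem _ hC1)
        have e3 : ((a : Fin n) : ℕ) < (((insert a (s.erase q))ᶜ.min' hC1 : Fin n) : ℕ) := e2.1
        have e4 : (((insert a (s.erase q))ᶜ.max' hC1 : Fin n) : ℕ) ≤ ((b : Fin n) : ℕ) := e1.2
        omega
      -- set with b swapped in
      have hC2 : (insert b (s.erase q))ᶜ.Nonempty := by
        refine ⟨a, (hmem b hbs a).mpr ⟨(haq.trans hqb).ne, Or.inl has⟩⟩
      have hbd2 : ∀ j ∈ (insert b (s.erase q))ᶜ, a ≤ j ∧ j < b := by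
        intro j hj
        rw [hmem b hbs j] at hj
        obtain ⟨hjb, hj2⟩ := hj
        rcases hj2 with hj2 | hj2
        · have : j ∈ sᶜ := Finset.mem_compl.mpr hj2
          exact ⟨Finset.min'_le _ _ this,
            lt_of_le_of_ne (Finset.le_max' _ _ this) hjb⟩
        · subst hj2; exact ⟨haq.le, hqb⟩
      have hm2 : (((insert b (s.erase q))ᶜ.max' hC2 : Fin n) : ℕ) ≤
          m + (((insert b (s.erase q))ᶜ.min' hC2 : Fin n) : ℕ) := by
        have e1 := hbd2 _ (Finset.max'_mem _ hC2)
        have e2 := hbd2 _ (Finset.min'_mem _ hC2)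
        have e3 : ((a : Fin n) : ℕ) ≤ (((insert b (s.erase q))ᶜ.min' hC2 : Fin n) : ℕ) := e2.1
        have e4 : (((insert b (s.erase q))ᶜ.max' hC2 : Fin n) : ℕ) < ((b : Fin n) : ℕ) := e1.2
        omega
      obtain ⟨i₁, hi₁, hle₁⟩ := ih (insert a (s.erase q)) (hcard a has) hC1 hm1
      obtain ⟨i₂, hi₂, hle₂⟩ := ih (insert b (s.erase q)) (hcard b hbs) hC2 hm2
      have hswap := swap_le x s q a b hqs has hbs (hmono haq.le) (hmono hqb.le)
      rcases le_total (svar x (insert a (s.erase q))) (svar x (insert b (s.erase q))) with h | h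
      · exact ⟨i₂, hi₂, hswap.trans (max_le (h.trans hle₂) hle₂)⟩
      · exact ⟨i₁, hi₁, hswap.trans (max_le hle₁ (h.trans hle₁))⟩

theorem max_variance_subset_remove_consecutive {n k : ℕ} (hk : 0 < k) (hkn : k < n)
    (x : Fin n → ℝ) (hmono : Monotone x) :
    ∃ i, i + (n - k) ≤ n ∧ ∀ s : Finset (Fin n), s.card = k →
      svar x s ≤
        svar x (univ.filter (fun j : Fin n => (j : ℕ) < i ∨ i + (n - k) ≤ (j : ℕ))) := by
  obtain ⟨i0, hi0mem, hi0max⟩ := Finset.exists_max_image (Finset.range (k+1))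
    (fun i => svar x (univ.filter (fun j : Fin n => (j : ℕ) < i ∨ i + (n - k) ≤ (j : ℕ))))
    ⟨0, by simp⟩
  have hi0k : i0 ≤ k := Nat.lt_succ_iff.mp (Finset.mem_range.mp hi0mem)
  refine ⟨i0, by omega, ?_⟩
  intro s hs
  have hC : sᶜ.Nonempty := by
    rw [← Finset.card_pos, Finset.card_compl, hs, Fintype.card_fin]
    omega
  obtain ⟨i, hi, hle⟩ := lemA hk hkn x hmono n s hs hC (by
    have := ((sᶜ.max' hC : Fin n)).isLt
    omega)
  refine hle.trans (hi0max i (Finset.mem_range.mpr ?_))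
  omega
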